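/- arXiv:2306.15388 — 2 statements merged into one kernel-verified Lean document; each statement's English description precedes it below -/
import Mathlib

section
/- Let Q be a finite connected quiver. The free (path) category Path_Q of Q is isomorphic, as a category, to the reachability category Reach_Q if and only if Q contains no directed cycles and no quasi-bigons; equivalently, if and only if for every ordered pair of vertices v, w the type of directed paths from v to w in Q is a subsingleton (there is at most one path from v to w, and the only path from a vertex to itself is the empty path). -/
universe u

open CategoryTheory

/-- The reachability category of a quiver `V`: same vertices, carrying the
reachability preorder (`v ≤ w` iff there is a directed path from `v` to `w`),
regarded as a thin category via `Preorder.smallCategory`. -/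
def Reach (V : Type*) [Quiver V] : Type _ := V

/-- A vertex of `V`, viewed as an object of `Reach V`. -/
def Reach.mk {V : Type*} [Quiver V] (v : V) : Reach V := v

/-- The vertex of `V` underlying an object of `Reach V`. -/
def Reach.out {V : Type*} [Quiver V] (v : Reach V) : V := v

/-- The reachability preorder: `v ≤ w` iff there exists a directed path `v` to `w`. -/
instance Reach.instPreorder (V : Type*) [Quiver V] : Preorder (Reach V) where
  le v w := Nonempty (Quiver.Path v.out w.out)
  le_refl v := ⟨Quiver.Path.nil⟩
  le_trans a b c h₁ h₂ := ⟨h₁.some.comp h₂.some⟩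

/-- for a finite connected quiver `V`, the path category `Paths V`
(the free category on `V`) is isomorphic, as a category (i.e. in `Cat`), to the
reachability category `Reach V` if and only if `V` has no directed cycles and no
quasi-bigons, equivalently iff for every ordered pair of vertices `v, w` the type
of directed paths from `v` to `w` is a subsingleton. -/
theorem statement3 (V : Type u) [Quiver.{u + 1} V] [Fintype V]
    [∀ a b : V, Fintype (a ⟶ b)] [Nonempty V]
    (hconn : ∀ v w : Quiver.Symmetrify V, Nonempty (Quiver.Path v w)) :
    Nonempty (CategoryTheory.Cat.of (CategoryTheory.Paths V) ≅
        CategoryTheory.Cat.of (CategoryTheory.ULiftHom.{u + 1} (Reach V))) ↔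
      ∀ v w : V, Subsingleton (Quiver.Path v w) := by
  constructor
  · rintro ⟨e⟩ v w
    constructor
    intro p q
    let p' : @Quiver.Hom (Paths V) CategoryStruct.toQuiver v w := p
    let q' : @Quiver.Hom (Paths V) CategoryStruct.toQuiver v w := q
    have hFG : (e.hom.toFunctor : Paths V ⥤ ULiftHom.{u + 1} (Reach V)) ⋙
        (e.inv.toFunctor : ULiftHom.{u + 1} (Reach V) ⥤ Paths V) = CategoryTheory.Functor.id (Paths V) :=
      congrArg Cat.Hom.toFunctor e.hom_inv_id
    have hmap : e.hom.toFunctor.map p' = e.hom.toFunctor.map q' := ULift.ext _ _ (Subsingleton.elim _ _)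
    have h1 := Functor.congr_hom hFG p'
    have h2 := Functor.congr_hom hFG q'
    change e.inv.toFunctor.map (e.hom.toFunctor.map p') = eqToHom _ ≫ p' ≫ eqToHom _ at h1
    change e.inv.toFunctor.map (e.hom.toFunctor.map q') = eqToHom _ ≫ q' ≫ eqToHom _ at h2
    rw [hmap] at h1
    have h3 : eqToHom _ ≫ p' ≫ eqToHom _ = eqToHom _ ≫ q' ≫ eqToHom _ :=
      h1.symm.trans h2
    have h4 : p' = q' := by
      have key : ∀ (a b c d : Paths V) (ha : a = c) (hb : d = b) (x y : c ⟶ d),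
          eqToHom ha ≫ x ≫ eqToHom hb = eqToHom ha ≫ y ≫ eqToHom hb → x = y := by
        rintro a b c d rfl rfl x y h
        simpa using h
      exact key _ _ _ _ _ _ p' q' h3
    exact h4
  · intro hsub
    let F : Paths V ⥤ Reach V :=
      { obj := fun v => Reach.mk v,
        map := fun p => homOfLE ⟨p⟩,
        map_id := fun _ => Subsingleton.elim _ _,
        map_comp := fun _ _ => Subsingleton.elim _ _ }
    let G : Reach V ⥤ Paths V :=
      { obj := fun v => (Paths.of V).obj (Reach.out v),
        map := fun {a b} f => (leOfHom f).some,
        map_id := fun a => @Subsingleton.elim _ (hsub _ _) _ _,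
        map_comp := fun _ _ => @Subsingleton.elim _ (hsub _ _) _ _ }
    refine ⟨⟨(F ⋙ ULiftHom.up.{u, u, u + 1}).toCatHom, (ULiftHom.down.{u, u, u + 1} ⋙ G).toCatHom, Cat.ext ?_, Cat.ext ?_⟩⟩
    · show (F ⋙ ULiftHom.up.{u, u, u + 1}) ⋙ (ULiftHom.down.{u, u, u + 1} ⋙ G) = CategoryTheory.Functor.id (Paths V)
      exact CategoryTheory.Functor.ext (fun x => rfl)
        (fun a b f => @Subsingleton.elim _ (hsub _ _) _ _)
    · show (ULiftHom.down.{u, u, u + 1} ⋙ G) ⋙ (F ⋙ ULiftHom.up.{u, u, u + 1}) = CategoryTheory.Functor.id (ULiftHom.{u + 1} (Reach V))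
      exact CategoryTheory.Functor.ext (fun x => rfl)
        (fun a b f => ULift.ext _ _ (Subsingleton.elim _ _))
end

section
/- Let K be a field and let P and Q be finite partial orders. If the incidence algebras of P and Q over K are isomorphic as K-algebras, then P and Q are order-isomorphic; equivalently, their reachability categories are isomorphic. (This is the paper's Corollary that commuting algebras of finite posets being isomorphic forces the reachability categories to be isomorphic, since for a poset the commuting algebra is the incidence algebra and the reachability category is the poset itself.) -/
open Finset

namespace Stmt9Aux

variable (K : Type*) [Field K] {P : Type*} [PartialOrder P] [Fintype P]
  [LocallyFiniteOrder P] [DecidableEq P]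

/-- The diagonal idempotent at `x`. -/
def e (x : P) : IncidenceAlgebra K P :=
  ⟨fun a b => if a = x ∧ b = x then 1 else 0, fun a b hab => by
    simp only [ite_eq_right_iff, and_imp]
    rintro rfl rfl
    exact absurd le_rfl hab⟩

variable {K}

lemma e_apply (x a b : P) : (e K x) a b = if a = x ∧ b = x then 1 else 0 := rfl

lemma ne_zero_of_apply_ne_zero {f : IncidenceAlgebra K P} {a b : P} (h : f a b ≠ 0) :
    f ≠ 0 := fun h0 => h (by rw [h0]; rfl)

lemma e_ne_zero (x : P) : e K x ≠ 0 :=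
  ne_zero_of_apply_ne_zero (a := x) (b := x) (by simp [e_apply])

lemma mul_e_apply (f : IncidenceAlgebra K P) (y a b : P) :
    (f * e K y) a b = if b = y then f a b else 0 := by
  rw [IncidenceAlgebra.mul_apply]
  by_cases hb : b = y
  · subst hb
    simp only [if_pos rfl]
    rw [Finset.sum_eq_single b]
    · simp [e_apply]
    · intro z hz hzb
      simp [e_apply, hzb]
    · intro hb
      have : ¬ a ≤ b := fun hab => hb (Finset.mem_Icc.2 ⟨hab, le_rfl⟩)
      simp [IncidenceAlgebra.apply_eq_zero_of_not_le this]
  · rw [if_neg hb]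
    refine Finset.sum_eq_zero fun z _ => ?_
    simp [e_apply, hb]

lemma e_mul_apply (f : IncidenceAlgebra K P) (x a b : P) :
    (e K x * f) a b = if a = x then f a b else 0 := by
  rw [IncidenceAlgebra.mul_apply]
  by_cases ha : a = x
  · subst ha
    simp only [if_pos rfl]
    rw [Finset.sum_eq_single a]
    · simp [e_apply]
    · intro z hz hza
      simp [e_apply, hza]
    · intro ha
      have : ¬ a ≤ b := fun hab => ha (Finset.mem_Icc.2 ⟨le_rfl, hab⟩)
      simp [IncidenceAlgebra.apply_eq_zero_of_not_le this]
  · rw [if_neg ha]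
    refine Finset.sum_eq_zero fun z _ => ?_
    simp [e_apply, ha]

lemma e_mul_mul_e_apply (f : IncidenceAlgebra K P) (x y a b : P) :
    (e K x * f * e K y) a b = if a = x ∧ b = y then f a b else 0 := by
  rw [mul_e_apply, e_mul_apply]
  by_cases hb : b = y <;> by_cases ha : a = x <;> simp [ha, hb]

lemma e_mul_e (x y : P) : e K x * e K y = if x = y then e K x else 0 := by
  ext a b _
  rw [mul_e_apply]
  by_cases h : x = y
  · subst h
    rw [if_pos rfl]
    by_cases hb : b = x
    · subst hb
      rw [if_pos rfl]
    · rw [if_neg hb, e_apply, if_neg (fun hc => hb hc.2)]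
  · rw [if_neg h, IncidenceAlgebra.zero_apply]
    by_cases hb : b = y
    · subst hb
      rw [if_pos rfl, e_apply, if_neg]
      rintro ⟨rfl, rfl⟩
      exact h rfl
    · rw [if_neg hb]

/-- Evaluation at a pair as an additive monoid hom. -/
def applyAddHom (a b : P) : IncidenceAlgebra K P →+ K where
  toFun f := f a b
  map_zero' := rfl
  map_add' _ _ := rfl

lemma sum_apply {ι : Type*} (s : Finset ι) (F : ι → IncidenceAlgebra K P) (a b : P) :
    (∑ i ∈ s, F i) a b = ∑ i ∈ s, F i a b :=
  map_sum (applyAddHom a b) F s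

lemma sum_e : ∑ x : P, e K x = (1 : IncidenceAlgebra K P) := by
  ext a b _
  rw [sum_apply, IncidenceAlgebra.one_apply]
  by_cases hab : a = b
  · subst hab
    rw [if_pos rfl]
    rw [Finset.sum_eq_single a]
    · simp [e_apply]
    · intro z _ hz
      rw [e_apply, if_neg (fun hc => hz hc.1.symm)]
    · simp
  · rw [if_neg hab]
    refine Finset.sum_eq_zero fun z _ => ?_
    rw [e_apply, if_neg]
    rintro ⟨rfl, rfl⟩
    exact hab rfl

variable (K P) in
/-- The diagonal projection, a ring hom onto `P → K`. -/
def piHom : IncidenceAlgebra K P →+* (P → K) where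
  toFun f x := f x x
  map_one' := by funext x; simp
  map_mul' f g := by
    funext x
    simp [IncidenceAlgebra.mul_apply, Finset.Icc_self]
  map_zero' := rfl
  map_add' _ _ := rfl

lemma piHom_apply (f : IncidenceAlgebra K P) (x : P) : piHom K P f x = f x x := rfl

lemma piHom_e (x y : P) : piHom K P (e K x) y = if y = x then 1 else 0 := by
  simp [piHom_apply, e_apply]

lemma pow_apply_eq_zero_of_diag {f : IncidenceAlgebra K P} (hf : ∀ x : P, f x x = 0) :
    ∀ (n : ℕ) (a b : P), (Finset.Icc a b).card ≤ n → (f ^ n) a b = 0 := by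
  intro n
  induction n with
  | zero =>
    intro a b hab
    by_cases h : a ≤ b
    · have : 0 < (Finset.Icc a b).card :=
        Finset.card_pos.2 ⟨a, Finset.mem_Icc.2 ⟨le_rfl, h⟩⟩
      omega
    · rw [pow_zero]
      exact IncidenceAlgebra.apply_eq_zero_of_not_le h _
  | succ n ih =>
    intro a b hab
    rw [pow_succ']
    rw [IncidenceAlgebra.mul_apply]
    refine Finset.sum_eq_zero fun z hz => ?_
    by_cases hza : z = a
    · subst hza
      rw [hf, zero_mul]
    · have hz' := Finset.mem_Icc.1 hz
      have hsub : Finset.Icc z b ⊆ Finset.Icc a b :=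
        Finset.Icc_subset_Icc hz'.1 le_rfl
      have hanotin : a ∉ Finset.Icc z b := fun hc =>
        hza (le_antisymm (Finset.mem_Icc.1 hc).1 hz'.1)
      have hlt : (Finset.Icc z b).card < (Finset.Icc a b).card :=
        Finset.card_lt_card ⟨hsub, fun hs => hanotin (hs (Finset.mem_Icc.2 ⟨le_rfl, hz'.1.trans hz'.2⟩))⟩
      rw [ih z b (by omega), mul_zero]

lemma pow_eq_zero_of_diag {f : IncidenceAlgebra K P} (hf : ∀ x : P, f x x = 0) :
    f ^ (Fintype.card P + 1) = 0 := by
  ext a b _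
  rw [IncidenceAlgebra.zero_apply]
  exact pow_apply_eq_zero_of_diag hf _ a b
    (le_trans (Finset.card_le_univ _) (by simp))

lemma isNilpotent_of_diag {f : IncidenceAlgebra K P} (hf : ∀ x : P, f x x = 0) :
    IsNilpotent f := ⟨_, pow_eq_zero_of_diag hf⟩

/-- Order detection inside the incidence algebra. -/
lemma exists_mul_ne_zero_iff (x y : P) :
    (∃ a : IncidenceAlgebra K P, e K x * a * e K y ≠ 0) ↔ x ≤ y := by
  constructor
  · rintro ⟨a, ha⟩
    by_contra hxy
    apply ha
    ext s t _
    rw [e_mul_mul_e_apply, IncidenceAlgebra.zero_apply]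
    rcases Decidable.em (s = x ∧ t = y) with ⟨rfl, rfl⟩ | h
    · rw [if_pos ⟨rfl, rfl⟩]
      exact IncidenceAlgebra.apply_eq_zero_of_not_le hxy a
    · rw [if_neg h]
  · intro hxy
    refine ⟨⟨fun s t => if s = x ∧ t = y then 1 else 0, fun s t hst => by
      simp only [ite_eq_right_iff, and_imp]
      rintro rfl rfl
      exact absurd hxy hst⟩, ?_⟩
    apply ne_zero_of_apply_ne_zero (a := x) (b := y)
    rw [e_mul_mul_e_apply, if_pos ⟨rfl, rfl⟩]
    simp

lemma conj_exists_iff {R : Type*} [Ring R] (u : Rˣ) (p q : R) :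
    (∃ b, (↑u * p * ↑u⁻¹) * b * (↑u * q * ↑u⁻¹) ≠ 0) ↔ ∃ b, p * b * q ≠ 0 := by
  have key : ∀ a : R, ↑u * a * ↑u⁻¹ = 0 ↔ a = 0 := by
    intro a
    constructor
    · intro h
      have := congrArg (fun z => (↑u⁻¹ : R) * z * ↑u) h
      simpa [mul_assoc, Units.inv_mul_cancel_left, Units.inv_mul_cancel_right] using this
    · rintro rfl; simp
  have key2 : ∀ a b : R, (↑u * a * ↑u⁻¹) * (↑u * b * ↑u⁻¹) = ↑u * (a * b) * ↑u⁻¹ := by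
    intro a b
    simp [mul_assoc, Units.inv_mul_cancel_left]
  constructor
  · rintro ⟨b, hb⟩
    refine ⟨↑u⁻¹ * b * ↑u, fun h0 => hb ?_⟩
    have hb' : (↑u * p * ↑u⁻¹) * b * (↑u * q * ↑u⁻¹)
        = ↑u * (p * (↑u⁻¹ * b * ↑u) * q) * ↑u⁻¹ := by
      simp [mul_assoc, Units.inv_mul_cancel_left, Units.mul_inv_cancel_left]
    rw [hb', h0, mul_zero, zero_mul]
  · rintro ⟨b, hb⟩
    refine ⟨↑u * b * ↑u⁻¹, fun h0 => hb ?_⟩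
    rw [key2, key2] at h0
    exact (key _).1 h0

variable {Q : Type*} [PartialOrder Q] [Fintype Q] [LocallyFiniteOrder Q] [DecidableEq Q]

/-- The support finsets of the diagonal projections of the images of the `e x` are
nonempty and pairwise disjoint, giving a cardinality inequality. -/
lemma card_le (φ : IncidenceAlgebra K P ≃ₐ[K] IncidenceAlgebra K Q) :
    Fintype.card P ≤ Fintype.card Q := by
  classical
  set g : P → Q → K := fun x => piHom K Q (φ (e K x)) with hg
  have hidem : ∀ x : P, φ (e K x) * φ (e K x) = φ (e K x) := by
    intro x
    rw [← map_mul, e_mul_e, if_pos rfl]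
  have hpow : ∀ (x : P) (m : ℕ), φ (e K x) ^ (m + 1) = φ (e K x) := by
    intro x m
    induction m with
    | zero => rw [pow_one]
    | succ m ih => rw [pow_succ, ih, hidem]
  have hnonzero : ∀ x : P, ∃ q : Q, g x q ≠ 0 := by
    intro x
    by_contra hc
    push_neg at hc
    have hdiag : ∀ q : Q, (φ (e K x)) q q = 0 := hc
    have h0 : φ (e K x) = 0 := by
      rw [← hpow x (Fintype.card Q), pow_eq_zero_of_diag hdiag]
    exact e_ne_zero x (by simpa using φ.injective (by rw [h0, map_zero]))
  have hdisj : ∀ x y : P, x ≠ y → ∀ q : Q, g x q = 0 ∨ g y q = 0 := by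
    intro x y hxy q
    have : g x * g y = 0 := by
      rw [hg]
      show piHom K Q (φ (e K x)) * piHom K Q (φ (e K y)) = 0
      rw [← map_mul, ← map_mul, e_mul_e, if_neg hxy, map_zero, map_zero]
    have := congrFun this q
    rw [Pi.mul_apply, Pi.zero_apply] at this
    rcases mul_eq_zero.1 this with h | h
    · exact Or.inl h
    · exact Or.inr h
  set S : P → Finset Q := fun x => Finset.univ.filter (fun q => g x q ≠ 0) with hS
  have hcard : Fintype.card P ≤ (Finset.univ.biUnion S).card := by
    rw [Finset.card_biUnion]
    · calc Fintype.card P = ∑ _x : P, 1 := by simp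
        _ ≤ ∑ x : P, (S x).card := by
            refine Finset.sum_le_sum fun x _ => ?_
            obtain ⟨q, hq⟩ := hnonzero x
            exact Finset.card_pos.2 ⟨q, by simp [hS, hq]⟩
    · intro x _ y _ hxy
      show Disjoint (S x) (S y)
      rw [Finset.disjoint_left]
      intro q hqx hqy
      simp only [hS, Finset.mem_filter] at hqx hqy
      rcases hdisj x y hxy q with h | h
      · exact hqx.2 h
      · exact hqy.2 h
  exact hcard.trans (Finset.card_le_univ _)

end Stmt9Aux

open Stmt9Aux

/-- if the incidence algebras over a field `K` of two finite partial
orders `P` and `Q` are isomorphic as `K`-algebras, then `P` and `Q` are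
order-isomorphic (equivalently, their reachability categories are isomorphic). -/
theorem statement9 (K : Type*) [Field K] (P Q : Type*)
    [PartialOrder P] [PartialOrder Q] [Fintype P] [Fintype Q]
    [LocallyFiniteOrder P] [LocallyFiniteOrder Q] [DecidableEq P] [DecidableEq Q]
    (h : Nonempty (IncidenceAlgebra K P ≃ₐ[K] IncidenceAlgebra K Q)) :
    Nonempty (P ≃o Q) := by
  classical
  obtain ⟨φ⟩ := h
  have hcardPQ : Fintype.card P = Fintype.card Q :=
    le_antisymm (card_le φ) (card_le φ.symm)
  set g : P → Q → K := fun x => piHom K Q (φ (e K x)) with hg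
  -- basic multiplicative facts
  have hidemB : ∀ x : P, φ (e K x) * φ (e K x) = φ (e K x) := fun x => by
    rw [← map_mul, e_mul_e, if_pos rfl]
  have horthB : ∀ x y : P, x ≠ y → φ (e K x) * φ (e K y) = 0 := fun x y hxy => by
    rw [← map_mul, e_mul_e, if_neg hxy, map_zero]
  have hidem : ∀ x : P, g x * g x = g x := fun x => by
    rw [hg]; show piHom K Q _ * piHom K Q _ = _
    rw [← map_mul, hidemB]
  have horth : ∀ x y : P, x ≠ y → g x * g y = 0 := fun x y hxy => by
    rw [hg]; show piHom K Q _ * piHom K Q _ = _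
    rw [← map_mul, horthB x y hxy, map_zero]
  have hsum : ∑ x : P, g x = 1 := by
    rw [hg]
    have : (∑ x : P, piHom K Q (φ (e K x))) = piHom K Q (φ (∑ x : P, e K x)) := by
      rw [map_sum, map_sum]
    rw [this, sum_e, map_one, map_one]
  -- supports
  set S : P → Finset Q := fun x => Finset.univ.filter (fun q => g x q ≠ 0) with hS
  have hpow : ∀ (x : P) (m : ℕ), φ (e K x) ^ (m + 1) = φ (e K x) := by
    intro x m
    induction m with
    | zero => rw [pow_one]
    | succ m ih => rw [pow_succ, ih, hidemB]
  have hnonzero : ∀ x : P, ∃ q : Q, g x q ≠ 0 := by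
    intro x
    by_contra hc
    push_neg at hc
    have h0 : φ (e K x) = 0 := by
      rw [← hpow x (Fintype.card Q), pow_eq_zero_of_diag hc]
    exact e_ne_zero x (by simpa using φ.injective (by rw [h0, map_zero]))
  have hdisj : ∀ x y : P, x ≠ y → Disjoint (S x) (S y) := by
    intro x y hxy
    rw [Finset.disjoint_left]
    intro q hqx hqy
    simp only [hS, Finset.mem_filter] at hqx hqy
    have := congrFun (horth x y hxy) q
    rw [Pi.mul_apply, Pi.zero_apply] at this
    rcases mul_eq_zero.1 this with h | h
    · exact hqx.2 h
    · exact hqy.2 h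
  have hcover : Finset.univ.biUnion S = Finset.univ := by
    refine Finset.eq_univ_of_forall fun q => ?_
    have h1 : (∑ x : P, g x) q = 1 := by rw [hsum]; rfl
    rw [Finset.sum_apply] at h1
    have : ∃ x : P, g x q ≠ 0 := by
      by_contra hc
      push_neg at hc
      rw [Finset.sum_eq_zero (fun x _ => hc x)] at h1
      exact one_ne_zero h1.symm
    obtain ⟨x, hx⟩ := this
    exact Finset.mem_biUnion.2 ⟨x, Finset.mem_univ x, by simp [hS, hx]⟩
  have hsumcard : ∑ x : P, (S x).card = Fintype.card Q := by
    rw [← Finset.card_biUnion (fun x _ => fun y _ => hdisj x y), hcover]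
    exact Finset.card_univ
  have hone : ∀ x : P, (S x).card = 1 := by
    have hle : ∀ x ∈ (Finset.univ : Finset P), 1 ≤ (S x).card := by
      intro x _
      obtain ⟨q, hq⟩ := hnonzero x
      exact Finset.card_pos.2 ⟨q, by simp [hS, hq]⟩
    have heq : ∑ _x : P, 1 = ∑ x : P, (S x).card := by
      rw [hsumcard, Finset.sum_const, smul_eq_mul, mul_one, Finset.card_univ, hcardPQ]
    intro x
    exact ((Finset.sum_eq_sum_iff_of_le hle).1 heq x (Finset.mem_univ x)).symm
  -- define σ
  have hsig : ∀ x : P, ∃ q : Q, S x = {q} := fun x => Finset.card_eq_one.1 (hone x)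
  choose σ hσ using hsig
  have hmem : ∀ (x : P) (q : Q), g x q ≠ 0 ↔ q = σ x := by
    intro x q
    constructor
    · intro hq
      have : q ∈ S x := by simp [hS, hq]
      rw [hσ x] at this
      exact Finset.mem_singleton.1 this
    · rintro rfl
      have : σ x ∈ S x := by rw [hσ x]; exact Finset.mem_singleton_self _
      simp only [hS, Finset.mem_filter] at this
      exact this.2
  have hgval : ∀ (x : P) (q : Q), g x q = if q = σ x then 1 else 0 := by
    intro x q
    by_cases hq : q = σ x
    · rw [if_pos hq]
      have hne : g x q ≠ 0 := (hmem x q).2 hq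
      have hsq := congrFun (hidem x) q
      rw [Pi.mul_apply] at hsq
      have hsq' : g x q * g x q = 1 * g x q := by rw [one_mul]; exact hsq
      exact mul_right_cancel₀ hne hsq'
    · rw [if_neg hq]
      by_contra hne
      exact hq ((hmem x q).1 hne)
  have hσinj : Function.Injective σ := by
    intro x y hxy
    by_contra hne
    have h1 : g x (σ x) ≠ 0 := (hmem x (σ x)).2 rfl
    have h2 : g y (σ x) ≠ 0 := (hmem y (σ x)).2 (by rw [hxy])
    have := congrFun (horth x y hne) (σ x)
    rw [Pi.mul_apply, Pi.zero_apply] at this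
    rcases mul_eq_zero.1 this with h | h
    · exact h1 h
    · exact h2 h
  have hσbij : Function.Bijective σ :=
    (Fintype.bijective_iff_injective_and_card σ).2 ⟨hσinj, hcardPQ⟩
  let eqv : P ≃ Q := Equiv.ofBijective σ hσbij
  -- the conjugating element
  set u₀ : IncidenceAlgebra K Q := ∑ x : P, φ (e K x) * e K (σ x) with hu₀
  have hinter : ∀ x : P, u₀ * e K (σ x) = φ (e K x) * u₀ := by
    intro x
    rw [hu₀, Finset.sum_mul, Finset.mul_sum]
    refine Finset.sum_congr rfl fun y _ => ?_
    have L : φ (e K y) * e K (σ y) * e K (σ x)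
        = if y = x then φ (e K x) * e K (σ x) else 0 := by
      rw [mul_assoc, e_mul_e]
      by_cases hxy : y = x
      · subst hxy
        rw [if_pos rfl, if_pos rfl]
      · rw [if_neg (fun hc => hxy (hσinj hc)), if_neg hxy, mul_zero]
    have R : φ (e K x) * (φ (e K y) * e K (σ y))
        = if y = x then φ (e K x) * e K (σ x) else 0 := by
      rw [← mul_assoc, ← map_mul, e_mul_e]
      by_cases hxy : y = x
      · subst hxy
        rw [if_pos rfl, if_pos rfl]
      · rw [if_neg (fun hc => hxy hc.symm), if_neg hxy, map_zero, zero_mul]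
    rw [L, R]
  have hπu : piHom K Q u₀ = 1 := by
    funext q
    rw [hu₀, map_sum, Finset.sum_apply]
    have hterm : ∀ x : P, (piHom K Q (φ (e K x) * e K (σ x))) q
        = if q = σ x then 1 else 0 := by
      intro x
      rw [piHom_apply, mul_e_apply]
      by_cases hq : q = σ x
      · rw [if_pos hq, if_pos hq]
        have h1 := hgval x q
        rw [if_pos hq] at h1
        exact h1
      · rw [if_neg hq, if_neg hq]
    rw [Finset.sum_congr rfl (fun x _ => hterm x)]
    rw [Finset.sum_eq_single (eqv.symm q)]
    · rw [if_pos, Pi.one_apply]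
      exact (Equiv.apply_symm_apply eqv q).symm
    · intro z _ hz
      rw [if_neg]
      intro hc
      apply hz
      exact hc ▸ (eqv.symm_apply_apply z).symm
    · simp
  have hnil : IsNilpotent (1 - u₀) := by
    apply isNilpotent_of_diag
    intro q
    have : piHom K Q (1 - u₀) q = 0 := by
      rw [map_sub, hπu, map_one, sub_self]; rfl
    exact this
  have hunit : IsUnit u₀ := by
    have := hnil.isUnit_one_sub
    simpa using this
  obtain ⟨u, hu⟩ := hunit
  have hconj : ∀ x : P, φ (e K x) = ↑u * e K (σ x) * ↑u⁻¹ := by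
    intro x
    have h1 : ↑u * e K (σ x) = φ (e K x) * ↑u := by rw [hu]; exact hinter x
    calc φ (e K x) = φ (e K x) * ↑u * ↑u⁻¹ := by
          rw [mul_assoc, Units.mul_inv, mul_one]
      _ = ↑u * e K (σ x) * ↑u⁻¹ := by rw [← h1]
  -- the order equivalence
  have hkey : ∀ x y : P, x ≤ y ↔ σ x ≤ σ y := by
    intro x y
    rw [← exists_mul_ne_zero_iff (K := K) x y, ← exists_mul_ne_zero_iff (K := K) (σ x) (σ y)]
    have step1 : (∃ a : IncidenceAlgebra K P, e K x * a * e K y ≠ 0)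
        ↔ ∃ b : IncidenceAlgebra K Q, φ (e K x) * b * φ (e K y) ≠ 0 := by
      constructor
      · rintro ⟨a, ha⟩
        refine ⟨φ a, fun h0 => ha ?_⟩
        have : φ (e K x * a * e K y) = 0 := by rw [map_mul, map_mul, h0]
        exact (map_eq_zero_iff φ φ.injective).1 this
      · rintro ⟨b, hb⟩
        refine ⟨φ.symm b, fun h0 => hb ?_⟩
        have : φ (e K x * φ.symm b * e K y) = 0 := by rw [h0, map_zero]
        rw [map_mul, map_mul, AlgEquiv.apply_symm_apply] at this
        exact this
    rw [step1]
    have step2 : ∀ b : IncidenceAlgebra K Q,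
        φ (e K x) * b * φ (e K y) = (↑u * e K (σ x) * ↑u⁻¹) * b * (↑u * e K (σ y) * ↑u⁻¹) := by
      intro b
      rw [hconj x, hconj y]
    constructor
    · rintro ⟨b, hb⟩
      rw [step2 b] at hb
      exact (conj_exists_iff u (e K (σ x)) (e K (σ y))).1 ⟨b, hb⟩
    · intro hex
      obtain ⟨b, hb⟩ := (conj_exists_iff u (e K (σ x)) (e K (σ y))).2 hex
      exact ⟨b, by rw [step2 b]; exact hb⟩
  exact ⟨{ toEquiv := eqv, map_rel_iff' := fun {a b} => (hkey a b).symm }⟩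
end
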